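/- Let V₁ and V₂ be finite-dimensional real vector spaces and let C₁ ⊆ V₁ and C₂ ⊆ V₂ be almost compact cones. Then the tensor product cone C₁ ⊗ C₂ is an almost compact cone in V₁ ⊗ V₂; that is, C₁ ⊗ C₂ is a convex cone that is closed, pointed ((C₁⊗C₂) ∩ (−(C₁⊗C₂)) = {0}), and has nonempty interior in V₁ ⊗ V₂. -/

import Mathlib

open Set

lemma carath_rep {E : Type*} [NormedAddCommGroup E] [NormedSpace ℝ E] [FiniteDimensional ℝ E]
    {s : Set E} (hne : s.Nonempty) {x : E} (hx : x ∈ convexHull ℝ s) :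
    ∃ (w : Fin (Module.finrank ℝ E + 1) → ℝ) (z : Fin (Module.finrank ℝ E + 1) → E),
      (∀ i, 0 ≤ w i) ∧ ∑ i, w i = 1 ∧ (∀ i, z i ∈ s) ∧ ∑ i, w i • z i = x := by
  obtain ⟨ι, _, z, w, hzs, hind, hwpos, hwsum, hx⟩ := eq_pos_convex_span_of_mem_convexHull hx
  have hcard : Fintype.card ι ≤ Fintype.card (Fin (Module.finrank ℝ E + 1)) := by
    simp only [Fintype.card_fin]
    exact hind.card_le_finrank_succ.trans (by
      have := Submodule.finrank_le (vectorSpan ℝ (Set.range z))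
      omega)
  obtain ⟨e⟩ := Function.Embedding.nonempty_of_card_le hcard
  obtain ⟨c, hc⟩ := hne
  classical
  have hzchoose : ∀ i : ι, (⟨i, rfl⟩ : ∃ i', e i' = e i).choose = i := fun i =>
    e.injective (⟨i, rfl⟩ : ∃ i', e i' = e i).choose_spec
  refine ⟨fun j => ∑ i, if e i = j then w i else 0,
    fun j => if h : ∃ i, e i = j then z h.choose else c, ?_, ?_, ?_, ?_⟩
  · intro j
    exact Finset.sum_nonneg fun i _ => by
      split <;> simp [le_of_lt (hwpos i)]
  · rw [Finset.sum_comm]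
    rw [← hwsum]
    refine Finset.sum_congr rfl fun i _ => ?_
    simp [Finset.sum_ite_eq]
  · intro j
    simp only []
    split
    · exact hzs ⟨_, rfl⟩
    · exact hc
  · rw [← hx]
    have : ∀ j, (∑ i, if e i = j then w i else 0) •
        (if h : ∃ i, e i = j then z h.choose else c)
        = ∑ i, if e i = j then w i • z i else 0 := by
      intro j
      rw [Finset.sum_smul]
      refine Finset.sum_congr rfl fun i _ => ?_
      by_cases h : e i = j
      · subst h
        rw [if_pos rfl, if_pos rfl, dif_pos ⟨i, rfl⟩, hzchoose]
      · simp [h]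
    simp only [this]
    rw [Finset.sum_comm]
    refine Finset.sum_congr rfl fun i _ => ?_
    simp [Finset.sum_ite_eq]
open Set
lemma isCompact_convexHull' {E : Type*} [NormedAddCommGroup E] [NormedSpace ℝ E]
    [FiniteDimensional ℝ E] {s : Set E} (hs : IsCompact s) :
    IsCompact (convexHull ℝ s) := by
  rcases s.eq_empty_or_nonempty with rfl | hne
  · simp
  set n := Module.finrank ℝ E + 1
  have key : convexHull ℝ s =
      (fun p : (Fin n → ℝ) × (Fin n → E) => ∑ i, p.1 i • p.2 i) ''
        ((stdSimplex ℝ (Fin n)) ×ˢ (Set.univ.pi fun _ => s)) := by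
    apply Subset.antisymm
    · intro x hx
      obtain ⟨w, z, hw0, hw1, hzs, hsum⟩ := carath_rep hne hx
      exact ⟨(w, z), ⟨⟨hw0, hw1⟩, fun i _ => hzs i⟩, hsum⟩
    · rintro _ ⟨⟨w, z⟩, ⟨⟨hw0, hw1⟩, hz⟩, rfl⟩
      exact mem_convexHull_of_exists_fintype w z hw0 hw1 (fun i => hz i (mem_univ i)) rfl
  rw [key]
  refine (IsCompact.prod (isCompact_stdSimplex _ _) (isCompact_univ_pi fun _ => hs)).image ?_
  exact continuous_finset_sum _ fun i _ =>
    ((continuous_apply i).comp continuous_fst).smul ((continuous_apply i).comp continuous_snd)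
open Set

lemma strict_functional {V : Type*} [NormedAddCommGroup V] [NormedSpace ℝ V]
    [FiniteDimensional ℝ V] {C : Set V}
    (hadd : ∀ x ∈ C, ∀ y ∈ C, x + y ∈ C)
    (hsmul : ∀ c : ℝ, 0 ≤ c → ∀ x ∈ C, c • x ∈ C)
    (hclosed : IsClosed C) (hpoint : C ∩ (-C) = {0}) :
    ∃ f : V →L[ℝ] ℝ, ∀ x ∈ C, x ≠ 0 → 0 < f x := by
  classical
  set s : Set V := C ∩ Metric.sphere (0 : V) 1 with hs
  have hscomp : IsCompact s :=
    (isCompact_sphere (0 : V) 1).of_isClosed_subset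
      (hclosed.inter Metric.isClosed_sphere) inter_subset_right
  set D := convexHull ℝ s with hD
  have hDcomp : IsCompact D := isCompact_convexHull' hscomp
  have h0D : (0 : V) ∉ D := by
    intro h0
    rw [hD, mem_convexHull_iff_exists_fintype] at h0
    obtain ⟨ι, _, w, z, hw0, hw1, hzs, hsum⟩ := h0
    obtain ⟨i₀, hi₀⟩ : ∃ i, w i ≠ 0 := by
      by_contra h
      push_neg at h
      rw [Finset.sum_eq_zero (fun i _ => h i)] at hw1
      norm_num at hw1
    have hrest : ∑ i ∈ Finset.univ.erase i₀, w i • z i = -(w i₀ • z i₀) := by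
      have h' := Finset.sum_erase_add Finset.univ (fun i => w i • z i) (Finset.mem_univ i₀)
      rw [hsum] at h'
      exact eq_neg_of_add_eq_zero_left h'
    have h0C : (0 : V) ∈ C := by simpa using hsmul 0 le_rfl (z i₀) (hzs i₀).1
    have hsumC : ∑ i ∈ Finset.univ.erase i₀, w i • z i ∈ C :=
      Finset.sum_induction _ (· ∈ C) (fun a b ha hb => hadd a ha b hb) h0C
        (fun i _ => hsmul _ (hw0 i) _ (hzs i).1)
    have hmem : w i₀ • z i₀ ∈ C ∩ (-C) := by
      refine ⟨hsmul _ (hw0 i₀) _ (hzs i₀).1, ?_⟩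
      rw [Set.mem_neg, ← hrest]
      exact hsumC
    rw [hpoint] at hmem
    rcases smul_eq_zero.1 (mem_singleton_iff.1 hmem) with h | h
    · exact hi₀ h
    · have := (hzs i₀).2
      rw [mem_sphere_zero_iff_norm] at this
      rw [h] at this
      norm_num at this
  obtain ⟨f, c, hfc, hcb⟩ :=
    geometric_hahn_banach_point_closed (convex_convexHull ℝ s) hDcomp.isClosed h0D
  have hc0 : 0 < c := by simpa using hfc
  refine ⟨f, fun x hx hx0 => ?_⟩
  have hxn : ‖x‖ ≠ 0 := norm_ne_zero_iff.2 hx0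
  set x' := ‖x‖⁻¹ • x with hx'
  have hx'C : x' ∈ C := hsmul _ (by positivity) _ hx
  have hx's : x' ∈ s := by
    refine ⟨hx'C, ?_⟩
    rw [mem_sphere_zero_iff_norm, hx', norm_smul, norm_inv, norm_norm]
    exact inv_mul_cancel₀ hxn
  have hfx' : c < f x' := hcb _ (subset_convexHull ℝ s hx's)
  have hxeq : x = ‖x‖ • x' := by rw [hx', smul_inv_smul₀ hxn]
  calc (0:ℝ) < ‖x‖ * c := by positivity
    _ ≤ ‖x‖ * f x' := by nlinarith [norm_nonneg x]
    _ = f x := by conv_rhs => rw [hxeq, map_smul, smul_eq_mul]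

lemma compact_base {V : Type*} [NormedAddCommGroup V] [NormedSpace ℝ V]
    [FiniteDimensional ℝ V] {C : Set V}
    (hsmul : ∀ c : ℝ, 0 ≤ c → ∀ x ∈ C, c • x ∈ C)
    (hclosed : IsClosed C) (f : V →L[ℝ] ℝ) (hf : ∀ x ∈ C, x ≠ 0 → 0 < f x) :
    IsCompact (C ∩ f ⁻¹' {1}) := by
  set s : Set V := C ∩ Metric.sphere (0 : V) 1 with hs
  have hscomp : IsCompact s :=
    (isCompact_sphere (0 : V) 1).of_isClosed_subset
      (hclosed.inter Metric.isClosed_sphere) inter_subset_right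
  have hBclosed : IsClosed (C ∩ f ⁻¹' {1}) :=
    hclosed.inter (isClosed_singleton.preimage f.continuous)
  rcases s.eq_empty_or_nonempty with hse | hsne
  · have : C ∩ f ⁻¹' {1} = ∅ := by
      ext x
      simp only [mem_inter_iff, mem_preimage, mem_singleton_iff, mem_empty_iff_false, iff_false,
        not_and]
      intro hxC hfx
      have hx0 : x ≠ 0 := by
        intro h; rw [h] at hfx; simp at hfx
      have : ‖x‖⁻¹ • x ∈ s := by
        refine ⟨hsmul _ (by positivity) _ hxC, ?_⟩
        rw [mem_sphere_zero_iff_norm, norm_smul, norm_inv, norm_norm]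
        exact inv_mul_cancel₀ (norm_ne_zero_iff.2 hx0)
      rw [hse] at this
      exact this
    rw [this]; exact isCompact_empty
  · obtain ⟨xm, hxm, hmin'⟩ := hscomp.exists_isMinOn hsne f.continuous.continuousOn
    have hmin : ∀ y ∈ s, f xm ≤ f y := fun y hy => hmin' hy
    have hxm0 : xm ≠ 0 := by
      intro h
      have := hxm.2
      rw [h, mem_sphere_zero_iff_norm] at this
      norm_num at this
    have hm : 0 < f xm := hf _ hxm.1 hxm0
    refine (isCompact_closedBall (0 : V) (f xm)⁻¹).of_isClosed_subset hBclosed ?_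
    intro x ⟨hxC, hfx⟩
    rw [mem_preimage, mem_singleton_iff] at hfx
    have hx0 : x ≠ 0 := by
      intro h; rw [h] at hfx; simp at hfx
    have hxn : (0:ℝ) < ‖x‖ := norm_pos_iff.2 hx0
    have hx's : ‖x‖⁻¹ • x ∈ s := by
      refine ⟨hsmul _ (by positivity) _ hxC, ?_⟩
      rw [mem_sphere_zero_iff_norm, norm_smul, norm_inv, norm_norm]
      exact inv_mul_cancel₀ (ne_of_gt hxn)
    have hle : f xm ≤ ‖x‖⁻¹ := by
      have := hmin _ hx's
      rwa [map_smul, hfx, smul_eq_mul, mul_one] at this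
    rw [mem_closedBall_zero_iff]
    rw [← inv_inv ‖x‖]
    exact inv_anti₀ hm hle

/-- A convex cone `C` in a finite-dimensional real vector space is an *almost compact cone*
if it is a convex cone that is closed, pointed (`C ∩ (−C) = {0}`) and full-dimensional
(nonempty interior). -/
def IsACCone {V : Type*} [NormedAddCommGroup V] [NormedSpace ℝ V] (C : Set V) : Prop :=
  (∀ x ∈ C, ∀ y ∈ C, x + y ∈ C) ∧
  (∀ c : ℝ, 0 ≤ c → ∀ x ∈ C, c • x ∈ C) ∧
  IsClosed C ∧
  C ∩ (-C) = {0} ∧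
  (interior C).Nonempty

set_option maxHeartbeats 2000000 in
/-- Let `W`, together with the bilinear map `u : V₁ → V₂ → W`, realize the tensor product
`V₁ ⊗ V₂` (i.e. the induced linear map `V₁ ⊗ V₂ → W` is bijective).  If `C₁ ⊆ V₁` and
`C₂ ⊆ V₂` are almost compact cones then the tensor product cone `C₁ ⊗ C₂`, consisting of all
finite sums `∑ᵢ cᵢ ⊗ dᵢ` with `cᵢ ∈ C₁`, `dᵢ ∈ C₂`, is an almost compact cone in `V₁ ⊗ V₂`. -/
theorem tensor_cone_is_almost_compact {V₁ V₂ W : Type*}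
    [NormedAddCommGroup V₁] [NormedSpace ℝ V₁] [FiniteDimensional ℝ V₁]
    [NormedAddCommGroup V₂] [NormedSpace ℝ V₂] [FiniteDimensional ℝ V₂]
    [NormedAddCommGroup W] [NormedSpace ℝ W] [FiniteDimensional ℝ W]
    (u : V₁ →ₗ[ℝ] V₂ →ₗ[ℝ] W) (hu : Function.Bijective (TensorProduct.lift u))
    (C₁ : Set V₁) (C₂ : Set V₂) (h₁ : IsACCone C₁) (h₂ : IsACCone C₂) :
    IsACCone {z : W | ∃ (k : ℕ) (a : Fin k → V₁) (b : Fin k → V₂),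
      (∀ j, a j ∈ C₁) ∧ (∀ j, b j ∈ C₂) ∧ z = ∑ j, u (a j) (b j)} := by
  classical
  set S : Set W := {z : W | ∃ (k : ℕ) (a : Fin k → V₁) (b : Fin k → V₂),
      (∀ j, a j ∈ C₁) ∧ (∀ j, b j ∈ C₂) ∧ z = ∑ j, u (a j) (b j)} with hSdef
  obtain ⟨h₁add, h₁smul, h₁closed, h₁point, h₁int⟩ := h₁
  obtain ⟨h₂add, h₂smul, h₂closed, h₂point, h₂int⟩ := h₂
  have h0S : (0 : W) ∈ S := ⟨0, fun j => j.elim0, fun j => j.elim0,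
    fun j => j.elim0, fun j => j.elim0, by simp⟩
  have hmemS : ∀ x ∈ C₁, ∀ y ∈ C₂, u x y ∈ S := fun x hx y hy =>
    ⟨1, fun _ => x, fun _ => y, fun _ => hx, fun _ => hy, by simp⟩
  have haddS : ∀ z ∈ S, ∀ z' ∈ S, z + z' ∈ S := by
    rintro z ⟨k, a, b, ha, hb, rfl⟩ z' ⟨k', a', b', ha', hb', rfl⟩
    refine ⟨k + k', Fin.append a a', Fin.append b b', ?_, ?_, ?_⟩
    · intro j
      refine Fin.addCases (fun i => ?_) (fun i => ?_) j
      · rw [Fin.append_left]; exact ha i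
      · rw [Fin.append_right]; exact ha' i
    · intro j
      refine Fin.addCases (fun i => ?_) (fun i => ?_) j
      · rw [Fin.append_left]; exact hb i
      · rw [Fin.append_right]; exact hb' i
    · rw [Fin.sum_univ_add]
      simp [Fin.append_left, Fin.append_right]
  have hsmulS : ∀ c : ℝ, 0 ≤ c → ∀ z ∈ S, c • z ∈ S := by
    rintro c hc z ⟨k, a, b, ha, hb, rfl⟩
    refine ⟨k, fun j => c • a j, b, fun j => h₁smul c hc _ (ha j), hb, ?_⟩
    rw [Finset.smul_sum]
    refine Finset.sum_congr rfl fun j _ => ?_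
    rw [map_smul, LinearMap.smul_apply]
  rcases subsingleton_or_nontrivial W with hW | hW
  · have hSuniv : S = univ := eq_univ_of_forall fun z => by
      rw [Subsingleton.elim z 0]; exact h0S
    refine ⟨haddS, hsmulS, ?_, ?_, ?_⟩
    · rw [hSuniv]; exact isClosed_univ
    · rw [hSuniv, Set.neg_univ, Set.univ_inter]
      exact Set.eq_singleton_iff_unique_mem.mpr ⟨mem_univ 0, fun x _ => Subsingleton.elim x 0⟩
    · rw [hSuniv, interior_univ]; exact ⟨0, mem_univ 0⟩
  · haveI hV₁ : Nontrivial V₁ := by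
      by_contra h
      rw [not_nontrivial_iff_subsingleton] at h
      have hall : ∀ w : W, w = 0 := by
        intro w
        obtain ⟨z, rfl⟩ := hu.2 w
        induction z using TensorProduct.induction_on with
        | zero => simp
        | tmul x y => rw [TensorProduct.lift.tmul, Subsingleton.elim x 0]; simp
        | add p q hp hq => rw [map_add, hp, hq, add_zero]
      exact not_subsingleton W (subsingleton_of_forall_eq 0 fun w => hall w)
    haveI hV₂ : Nontrivial V₂ := by
      by_contra h
      rw [not_nontrivial_iff_subsingleton] at h
      have hall : ∀ w : W, w = 0 := by
        intro w
        obtain ⟨z, rfl⟩ := hu.2 w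
        induction z using TensorProduct.induction_on with
        | zero => simp
        | tmul x y => rw [TensorProduct.lift.tmul, Subsingleton.elim y 0]; simp
        | add p q hp hq => rw [map_add, hp, hq, add_zero]
      exact not_subsingleton W (subsingleton_of_forall_eq 0 fun w => hall w)
    obtain ⟨f₁, hf₁⟩ := strict_functional h₁add h₁smul h₁closed h₁point
    obtain ⟨f₂, hf₂⟩ := strict_functional h₂add h₂smul h₂closed h₂point
    have hf₁nn : ∀ x ∈ C₁, 0 ≤ f₁ x := fun x hx => by
      by_cases h : x = 0
      · simp [h]
      · exact le_of_lt (hf₁ x hx h)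
    have hf₂nn : ∀ y ∈ C₂, 0 ≤ f₂ y := fun y hy => by
      by_cases h : y = 0
      · simp [h]
      · exact le_of_lt (hf₂ y hy h)
    have hf₁z : ∀ x ∈ C₁, f₁ x = 0 → x = 0 := fun x hx h0 => by
      by_contra hne
      exact absurd h0 (ne_of_gt (hf₁ x hx hne))
    have hf₂z : ∀ y ∈ C₂, f₂ y = 0 → y = 0 := fun y hy h0 => by
      by_contra hne
      exact absurd h0 (ne_of_gt (hf₂ y hy hne))
    have hc₁ : ∃ x ∈ C₁, x ≠ 0 := by
      obtain ⟨x₀, hx₀⟩ := h₁int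
      rcases Metric.isOpen_iff.1 isOpen_interior x₀ hx₀ with ⟨ε, hε, hball⟩
      obtain ⟨v, hv⟩ := exists_ne (0 : V₁)
      have hvn : (0:ℝ) < ‖v‖ := norm_pos_iff.2 hv
      set wv := (ε / (2 * ‖v‖)) • v with hwv
      have hwn : ‖wv‖ = ε / 2 := by
        rw [hwv, norm_smul, Real.norm_eq_abs, abs_of_pos (by positivity)]
        field_simp
      have hwv0 : wv ≠ 0 := by
        intro h
        rw [h, norm_zero] at hwn
        linarith
      have hx₀w : x₀ + wv ∈ C₁ := interior_subset (hball (by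
        rw [Metric.mem_ball, dist_eq_norm, add_sub_cancel_left, hwn]
        linarith))
      by_cases h0 : x₀ = 0
      · exact ⟨x₀ + wv, hx₀w, by rw [h0, zero_add]; exact hwv0⟩
      · exact ⟨x₀, interior_subset hx₀, h0⟩
    have hc₂ : ∃ y ∈ C₂, y ≠ 0 := by
      obtain ⟨x₀, hx₀⟩ := h₂int
      rcases Metric.isOpen_iff.1 isOpen_interior x₀ hx₀ with ⟨ε, hε, hball⟩
      obtain ⟨v, hv⟩ := exists_ne (0 : V₂)
      have hvn : (0:ℝ) < ‖v‖ := norm_pos_iff.2 hv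
      set wv := (ε / (2 * ‖v‖)) • v with hwv
      have hwn : ‖wv‖ = ε / 2 := by
        rw [hwv, norm_smul, Real.norm_eq_abs, abs_of_pos (by positivity)]
        field_simp
      have hwv0 : wv ≠ 0 := by
        intro h
        rw [h, norm_zero] at hwn
        linarith
      have hx₀w : x₀ + wv ∈ C₂ := interior_subset (hball (by
        rw [Metric.mem_ball, dist_eq_norm, add_sub_cancel_left, hwn]
        linarith))
      by_cases h0 : x₀ = 0
      · exact ⟨x₀ + wv, hx₀w, by rw [h0, zero_add]; exact hwv0⟩
      · exact ⟨x₀, interior_subset hx₀, h0⟩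
    obtain ⟨c₁, hc₁C, hc₁0⟩ := hc₁
    obtain ⟨c₂, hc₂C, hc₂0⟩ := hc₂
    set B₁ : Set V₁ := C₁ ∩ f₁ ⁻¹' {1} with hB₁def
    set B₂ : Set V₂ := C₂ ∩ f₂ ⁻¹' {1} with hB₂def
    have hB₁comp : IsCompact B₁ := compact_base h₁smul h₁closed f₁ hf₁
    have hB₂comp : IsCompact B₂ := compact_base h₂smul h₂closed f₂ hf₂
    have hfc₁ : 0 < f₁ c₁ := hf₁ c₁ hc₁C hc₁0
    have hfc₂ : 0 < f₂ c₂ := hf₂ c₂ hc₂C hc₂0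
    have hb₁ : (f₁ c₁)⁻¹ • c₁ ∈ B₁ := by
      refine ⟨h₁smul _ (by positivity) _ hc₁C, ?_⟩
      rw [mem_preimage, mem_singleton_iff, map_smul, smul_eq_mul]
      exact inv_mul_cancel₀ (ne_of_gt hfc₁)
    have hb₂ : (f₂ c₂)⁻¹ • c₂ ∈ B₂ := by
      refine ⟨h₂smul _ (by positivity) _ hc₂C, ?_⟩
      rw [mem_preimage, mem_singleton_iff, map_smul, smul_eq_mul]
      exact inv_mul_cancel₀ (ne_of_gt hfc₂)
    set b₁ : V₁ := (f₁ c₁)⁻¹ • c₁ with hb₁def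
    set b₂ : V₂ := (f₂ c₂)⁻¹ • c₂ with hb₂def
    -- the functional g with g (u x y) = f₁ x * f₂ y
    set bl : V₁ →ₗ[ℝ] V₂ →ₗ[ℝ] ℝ := LinearMap.mk₂ ℝ (fun x y => f₁ x * f₂ y)
      (fun x x' y => by simp [map_add, add_mul])
      (fun c x y => by simp [map_smul]; ring)
      (fun x y y' => by simp [map_add, mul_add])
      (fun c x y => by simp [map_smul]; ring) with hbl
    set e := LinearEquiv.ofBijective (TensorProduct.lift u) hu with he
    set g : W →L[ℝ] ℝ :=
      LinearMap.toContinuousLinearMap ((TensorProduct.lift bl).comp e.symm.toLinearMap) with hgdef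
    have hg : ∀ (x : V₁) (y : V₂), g (u x y) = f₁ x * f₂ y := by
      intro x y
      have h1 : u x y = e (x ⊗ₜ[ℝ] y) := by
        rw [he]
        simp [TensorProduct.lift.tmul]
      have h2 : g (u x y) = ((TensorProduct.lift bl).comp e.symm.toLinearMap) (u x y) := by
        rw [hgdef, LinearMap.coe_toContinuousLinearMap']
      rw [h2, LinearMap.comp_apply, LinearEquiv.coe_toLinearMap, h1, e.symm_apply_apply,
        TensorProduct.lift.tmul, hbl]
      simp
    -- continuity of the pairing
    have hcont : Continuous fun q : V₁ × V₂ => u q.1 q.2 := by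
      set u' : V₁ →ₗ[ℝ] (V₂ →L[ℝ] W) :=
        (LinearMap.toContinuousLinearMap :
          (V₂ →ₗ[ℝ] W) ≃ₗ[ℝ] (V₂ →L[ℝ] W)).toLinearMap.comp u with hu'
      set U : V₁ →L[ℝ] (V₂ →L[ℝ] W) := LinearMap.toContinuousLinearMap u' with hU
      have hUu : ∀ (x : V₁) (y : V₂), U x y = u x y := by
        intro x y
        rw [hU, LinearMap.coe_toContinuousLinearMap', hu']
        simp [LinearMap.coe_toContinuousLinearMap']
      have : Continuous fun q : V₁ × V₂ => U q.1 q.2 :=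
        (U.continuous.comp continuous_fst).clm_apply continuous_snd
      have heq : (fun q : V₁ × V₂ => u q.1 q.2) = fun q => U q.1 q.2 := by
        funext q
        rw [hUu]
      rw [heq]
      exact this
    set n := Module.finrank ℝ W + 1 with hn
    set S' : Set W := {z : W | ∃ (t : Fin n → ℝ) (a : Fin n → V₁) (b : Fin n → V₂),
      (∀ j, 0 ≤ t j) ∧ (∀ j, a j ∈ B₁) ∧ (∀ j, b j ∈ B₂) ∧
      z = ∑ j, t j • u (a j) (b j)} with hS'def
    have hS'S : S' ⊆ S := by
      rintro z ⟨t, a, b, ht, ha, hb, rfl⟩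
      refine ⟨n, fun j => t j • a j, b, fun j => h₁smul _ (ht j) _ (ha j).1,
        fun j => (hb j).1, ?_⟩
      refine Finset.sum_congr rfl fun j _ => ?_
      rw [map_smul, LinearMap.smul_apply]
    have hSS' : S ⊆ S' := by
      rintro z ⟨k, a, b, ha, hb, rfl⟩
      have hterm : ∀ j : Fin k, ∃ (s : ℝ) (x : V₁) (y : V₂),
          0 ≤ s ∧ x ∈ B₁ ∧ y ∈ B₂ ∧ u (a j) (b j) = s • u x y := by
        intro j
        by_cases haj : a j = 0
        · exact ⟨0, b₁, b₂, le_rfl, hb₁, hb₂, by rw [haj]; simp⟩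
        by_cases hbj : b j = 0
        · exact ⟨0, b₁, b₂, le_rfl, hb₁, hb₂, by rw [hbj]; simp⟩
        have hfa : 0 < f₁ (a j) := hf₁ _ (ha j) haj
        have hfb : 0 < f₂ (b j) := hf₂ _ (hb j) hbj
        refine ⟨f₁ (a j) * f₂ (b j), (f₁ (a j))⁻¹ • a j, (f₂ (b j))⁻¹ • b j, by positivity,
          ⟨h₁smul _ (by positivity) _ (ha j), by
            rw [mem_preimage, mem_singleton_iff, map_smul, smul_eq_mul]
            exact inv_mul_cancel₀ (ne_of_gt hfa)⟩,
          ⟨h₂smul _ (by positivity) _ (hb j), by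
            rw [mem_preimage, mem_singleton_iff, map_smul, smul_eq_mul]
            exact inv_mul_cancel₀ (ne_of_gt hfb)⟩, ?_⟩
        have hane := ne_of_gt hfa
        have hbne := ne_of_gt hfb
        have hstep : u ((f₁ (a j))⁻¹ • a j) ((f₂ (b j))⁻¹ • b j)
            = ((f₂ (b j))⁻¹ * (f₁ (a j))⁻¹) • u (a j) (b j) := by
          simp only [map_smul, LinearMap.smul_apply, smul_smul]
        rw [hstep, smul_smul,
          show (f₁ (a j) * f₂ (b j)) * ((f₂ (b j))⁻¹ * (f₁ (a j))⁻¹) = 1 from by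
            field_simp,
          one_smul]
      choose sj xj yj hsj hxj hyj heqj using hterm
      obtain ⟨T, hT⟩ : ∃ T : ℝ, T = ∑ j, sj j := ⟨_, rfl⟩
      have hTnn : 0 ≤ T := by
        rw [hT]
        exact Finset.sum_nonneg fun j _ => hsj j
      have hzeq : ∑ j, u (a j) (b j) = ∑ j, sj j • u (xj j) (yj j) :=
        Finset.sum_congr rfl fun j _ => heqj j
      rcases eq_or_lt_of_le hTnn with hT0 | hTpos
      · rw [hT] at hT0
        have hall : ∀ j, sj j = 0 := fun j =>
          (Finset.sum_eq_zero_iff_of_nonneg (fun j _ => hsj j)).1 hT0.symm j (Finset.mem_univ j)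
        refine ⟨fun _ => 0, fun _ => b₁, fun _ => b₂, fun _ => le_rfl, fun _ => hb₁,
          fun _ => hb₂, ?_⟩
        rw [hzeq]
        simp [hall]
      · set K : Set W := {w | ∃ x ∈ B₁, ∃ y ∈ B₂, w = u x y} with hK
        have hd : (∑ j, (sj j / T) • u (xj j) (yj j)) ∈ convexHull ℝ K :=
          mem_convexHull_of_exists_fintype (fun j => sj j / T) (fun j => u (xj j) (yj j))
            (fun j => div_nonneg (hsj j) hTnn)
            (by rw [← Finset.sum_div, ← hT, div_self (ne_of_gt hTpos)])
            (fun j => ⟨xj j, hxj j, yj j, hyj j, rfl⟩) rfl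
        obtain ⟨wg, pts, hwg0, hwg1, hptsK, hsum⟩ :=
          carath_rep (s := K) ⟨u b₁ b₂, b₁, hb₁, b₂, hb₂, rfl⟩ hd
        choose xs hxs ys hys hpts using hptsK
        refine ⟨fun i => T * wg i, xs, ys,
          fun i => mul_nonneg (le_of_lt hTpos) (hwg0 i), hxs, hys, ?_⟩
        calc ∑ j, u (a j) (b j) = ∑ j, sj j • u (xj j) (yj j) := hzeq
          _ = T • ∑ j, (sj j / T) • u (xj j) (yj j) := by
              rw [Finset.smul_sum]
              refine Finset.sum_congr rfl fun j _ => ?_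
              rw [smul_smul]
              congr 1
              field_simp
          _ = T • ∑ i, wg i • pts i := by rw [hsum]
          _ = ∑ i, (T * wg i) • u (xs i) (ys i) := by
              rw [Finset.smul_sum]
              refine Finset.sum_congr rfl fun i _ => ?_
              rw [smul_smul, hpts i]
    have hgS : ∀ z ∈ S, 0 ≤ g z ∧ (g z = 0 → z = 0) := by
      rintro z ⟨k, a, b, ha, hb, rfl⟩
      have hgsum : g (∑ j, u (a j) (b j)) = ∑ j, f₁ (a j) * f₂ (b j) := by
        rw [map_sum]
        exact Finset.sum_congr rfl fun j _ => hg _ _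
      have hnn : ∀ j ∈ Finset.univ, (0:ℝ) ≤ f₁ (a j) * f₂ (b j) := fun j _ =>
        mul_nonneg (hf₁nn _ (ha j)) (hf₂nn _ (hb j))
      constructor
      · rw [hgsum]
        exact Finset.sum_nonneg hnn
      · intro h0
        rw [hgsum] at h0
        have hz := (Finset.sum_eq_zero_iff_of_nonneg hnn).1 h0
        refine Finset.sum_eq_zero fun j _ => ?_
        rcases mul_eq_zero.1 (hz j (Finset.mem_univ j)) with h | h
        · rw [hf₁z _ (ha j) h]
          simp
        · rw [hf₂z _ (hb j) h]
          simp
    refine ⟨haddS, hsmulS, ?_, ?_, ?_⟩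
    · -- closedness
      have hSrep : S = S' := Subset.antisymm hSS' hS'S
      rw [hSrep]
      refine IsSeqClosed.isClosed ?_
      intro zs z hz hlim
      choose t a b ht ha hb heq using hz
      have hgz : ∀ m, g (zs m) = ∑ j, t m j := by
        intro m
        rw [heq m, map_sum]
        refine Finset.sum_congr rfl fun j _ => ?_
        have h1 : f₁ (a m j) = 1 := by
          have := (ha m j).2
          rwa [mem_preimage, mem_singleton_iff] at this
        have h2 : f₂ (b m j) = 1 := by
          have := (hb m j).2
          rwa [mem_preimage, mem_singleton_iff] at this
        rw [map_smul, smul_eq_mul, hg, h1, h2]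
        ring
      have htend : Filter.Tendsto (fun m => g (zs m)) Filter.atTop (nhds (g z)) :=
        (g.continuous.tendsto z).comp hlim
      obtain ⟨M, hM⟩ := htend.bddAbove_range
      have htM : ∀ m j, t m j ∈ Icc (0:ℝ) M := by
        intro m j
        refine ⟨ht m j, ?_⟩
        have h1 : t m j ≤ ∑ j', t m j' :=
          Finset.single_le_sum (fun j' _ => ht m j') (Finset.mem_univ j)
        have h2 : g (zs m) ≤ M := hM ⟨m, rfl⟩
        rw [hgz m] at h2
        linarith
      set Q : Set ((Fin n → ℝ) × (Fin n → V₁) × (Fin n → V₂)) :=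
        (univ.pi fun _ : Fin n => Icc (0:ℝ) M) ×ˢ
          ((univ.pi fun _ : Fin n => B₁) ×ˢ (univ.pi fun _ : Fin n => B₂)) with hQ
      have hQcomp : IsCompact Q :=
        (isCompact_univ_pi fun _ => isCompact_Icc).prod
          ((isCompact_univ_pi fun _ => hB₁comp).prod (isCompact_univ_pi fun _ => hB₂comp))
      have hmemQ : ∀ m, (t m, a m, b m) ∈ Q := fun m =>
        ⟨fun j _ => htM m j, fun j _ => ha m j, fun j _ => hb m j⟩
      obtain ⟨p, hpQ, φ, hφ, hconv⟩ := hQcomp.tendsto_subseq hmemQ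
      set Φ : (Fin n → ℝ) × (Fin n → V₁) × (Fin n → V₂) → W :=
        fun p => ∑ j, p.1 j • u (p.2.1 j) (p.2.2 j) with hΦ
      have hΦcont : Continuous Φ := by
        apply continuous_finset_sum
        intro j _
        have hg' : Continuous fun p : (Fin n → ℝ) × (Fin n → V₁) × (Fin n → V₂) =>
            (p.2.1 j, p.2.2 j) :=
          ((continuous_apply j).comp (continuous_fst.comp continuous_snd)).prodMk
            ((continuous_apply j).comp (continuous_snd.comp continuous_snd))
        exact ((continuous_apply j).comp continuous_fst).smul (hcont.comp hg')
      have h1 : Filter.Tendsto (fun i => Φ (t (φ i), a (φ i), b (φ i))) Filter.atTop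
          (nhds (Φ p)) := (hΦcont.tendsto p).comp hconv
      have h2 : (fun i => Φ (t (φ i), a (φ i), b (φ i))) = fun i => zs (φ i) := by
        funext i
        exact (heq (φ i)).symm
      have h3 : Filter.Tendsto (fun i => zs (φ i)) Filter.atTop (nhds z) :=
        hlim.comp hφ.tendsto_atTop
      rw [h2] at h1
      have hz' : z = Φ p := tendsto_nhds_unique h3 h1
      exact ⟨p.1, p.2.1, p.2.2, fun j => (hpQ.1 j (mem_univ j)).1,
        fun j => hpQ.2.1 j (mem_univ j), fun j => hpQ.2.2 j (mem_univ j), hz'⟩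
    · -- pointedness
      apply Subset.antisymm
      · rintro z ⟨hz, hz'⟩
        rw [Set.mem_neg] at hz'
        have h1 := hgS z hz
        have h2 := hgS _ hz'
        have hg0 : g z = 0 := by
          have := h2.1
          rw [map_neg] at this
          linarith [h1.1]
        rw [mem_singleton_iff]
        exact h1.2 hg0
      · intro z hz
        rw [mem_singleton_iff] at hz
        subst hz
        exact ⟨h0S, by rw [Set.mem_neg, neg_zero]; exact h0S⟩
    · -- interior nonempty
      have hconvS : Convex ℝ S := fun x hx y hy α β hα hβ hαβ =>
        haddS _ (hsmulS α hα x hx) _ (hsmulS β hβ y hy)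
      rw [hconvS.interior_nonempty_iff_affineSpan_eq_top,
        AffineSubspace.affineSpan_eq_top_iff_vectorSpan_eq_top_of_nonempty ℝ W W ⟨0, h0S⟩]
      have hspan1 : Submodule.span ℝ C₁ = ⊤ := by
        apply Submodule.eq_top_of_nonempty_interior'
        obtain ⟨x₀, hx₀⟩ := h₁int
        exact ⟨x₀, interior_mono Submodule.subset_span hx₀⟩
      have hspan2 : Submodule.span ℝ C₂ = ⊤ := by
        apply Submodule.eq_top_of_nonempty_interior'
        obtain ⟨x₀, hx₀⟩ := h₂int
        exact ⟨x₀, interior_mono Submodule.subset_span hx₀⟩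
      set P := Submodule.span ℝ S with hP
      have step1 : ∀ x ∈ C₁, ∀ y : V₂, u x y ∈ P := by
        intro x hx y
        have hle : Submodule.span ℝ C₂ ≤ Submodule.comap (u x) P :=
          Submodule.span_le.2 fun y' hy' => Submodule.subset_span (hmemS x hx y' hy')
        have hy : y ∈ Submodule.span ℝ C₂ := by rw [hspan2]; trivial
        exact hle hy
      have step2 : ∀ (x : V₁) (y : V₂), u x y ∈ P := by
        intro x y
        have hle : Submodule.span ℝ C₁ ≤ Submodule.comap (u.flip y) P :=
          Submodule.span_le.2 fun x' hx' => step1 x' hx' y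
        have hx : x ∈ Submodule.span ℝ C₁ := by rw [hspan1]; trivial
        have := hle hx
        simpa using this
      have hliftmem : ∀ zz : TensorProduct ℝ V₁ V₂, TensorProduct.lift u zz ∈ P := by
        intro zz
        induction zz using TensorProduct.induction_on with
        | zero => rw [map_zero]; exact P.zero_mem
        | tmul x y => rw [TensorProduct.lift.tmul]; exact step2 x y
        | add p q hp hq => rw [map_add]; exact P.add_mem hp hq
      have hspanS : P = ⊤ := by
        rw [eq_top_iff]
        intro w _
        obtain ⟨zz, rfl⟩ := hu.2 w
        exact hliftmem zz
      rw [eq_top_iff, ← hspanS, hP]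
      apply Submodule.span_le.2
      intro x hx
      rw [SetLike.mem_coe, vectorSpan_def]
      exact Submodule.subset_span ⟨x, hx, 0, h0S, by simp [vsub_eq_sub]⟩
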